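/- Let X and U be real normed spaces and let g: X × U → X satisfy g(0,0) = 0 and: for all C, D > 0 there exist constants L¹(C,D), L²(C,D) > 0 with ‖g(x,u) − g(y,u)‖ ≤ L¹(C,D)‖x − y‖ for all x, y with ‖x‖, ‖y‖ ≤ C and all u with ‖u‖ ≤ D, and ‖g(x,u) − g(x,v)‖ ≤ L²(C,D)‖u − v‖ for all x with ‖x‖ ≤ C and all u, v with ‖u‖, ‖v‖ ≤ D. Let κ ∈ 𝒦∞. Then there exists α̃ of class 𝒦 such that ‖g(x,u)‖ ≤ α̃(‖u‖) for all (x,u) ∈ X × U with ‖x‖ ≤ κ(‖u‖). -/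

import Mathlib

open Filter Topology Set MeasureTheory

noncomputable section

/-- Class 𝒦: continuous, strictly increasing on `[0,∞)`, vanishing at `0`. -/
def ClassK (γ : ℝ → ℝ) : Prop :=
  ContinuousOn γ (Set.Ici 0) ∧ StrictMonoOn γ (Set.Ici 0) ∧ γ 0 = 0

/-- Class 𝒦∞: class 𝒦 and unbounded. -/
def ClassKInf (γ : ℝ → ℝ) : Prop :=
  ClassK γ ∧ Filter.Tendsto γ Filter.atTop Filter.atTop

/-- Class 𝒦ℒ. -/
def ClassKL (β : ℝ → ℝ → ℝ) : Prop :=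
  (∀ s, 0 ≤ s → ClassK (fun r => β r s)) ∧
  (∀ r, 0 ≤ r → AntitoneOn (fun s => β r s) (Set.Ici 0) ∧
    Filter.Tendsto (fun s => β r s) Filter.atTop (nhds 0))

/-- Class 𝒫: continuous, positive definite. -/
def ClassP (φ : ℝ → ℝ) : Prop :=
  ContinuousOn φ (Set.Ici 0) ∧ φ 0 = 0 ∧ ∀ r, 0 < r → 0 < φ r

/-- Upper right Dini derivative `D⁺v(t) = limsup_{s→0⁺} (v(t+s) − v(t))/s`, valued in `EReal`. -/
def DiniUpper (v : ℝ → ℝ) (t : ℝ) : EReal :=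
  Filter.limsup (fun s => (((v (t + s) - v t) / s : ℝ) : EReal)) (nhdsWithin 0 (Set.Ioi 0))

/-- Impulse time sequence with initial time `t₀ = τ 0`: strictly increasing and tending to `∞`;
the impulse times are `τ i` for `i ≥ 1`. -/
def IsImpulseSeq (t₀ : ℝ) (τ : ℕ → ℝ) : Prop :=
  τ 0 = t₀ ∧ StrictMono τ ∧ Filter.Tendsto τ Filter.atTop Filter.atTop

/-- The set `S = {tᵢ : i ≥ 1}` of impulse times. -/
def impulseSet (τ : ℕ → ℝ) : Set ℝ := {s | ∃ i : ℕ, 1 ≤ i ∧ τ i = s}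

/-- Impulsive-regular function on `[t₀,∞)`: right-continuous everywhere, continuous (within
`[t₀,∞)`) at every non-impulse time, and left limits exist at every impulse time. -/
def ImpulsiveRegular (t₀ : ℝ) (τ : ℕ → ℝ) (v : ℝ → ℝ) : Prop :=
  (∀ t, t₀ ≤ t → ContinuousWithinAt v (Set.Ici t) t) ∧
  (∀ t, t₀ ≤ t → t ∉ impulseSet τ → ContinuousWithinAt v (Set.Ici t₀) t) ∧
  (∀ i : ℕ, 1 ≤ i → ∃ L : ℝ, Filter.Tendsto v (nhdsWithin (τ i) (Set.Iio (τ i))) (nhds L))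

/-- clamp to `[0,1]`. -/
noncomputable def jkClamp (t : ℝ) : ℝ := min (max t 0) 1

lemma jkClamp_continuous : Continuous jkClamp :=
  (continuous_id.max continuous_const).min continuous_const

lemma jkClamp_mono : Monotone jkClamp :=
  fun _ _ h => min_le_min (max_le_max h le_rfl) le_rfl

lemma jkClamp_of_nonpos {t : ℝ} (h : t ≤ 0) : jkClamp t = 0 := by
  simp [jkClamp, max_eq_right h]

lemma jkClamp_of_one_le {t : ℝ} (h : 1 ≤ t) : jkClamp t = 1 := by
  have : max t 0 = t := max_eq_left (by linarith)
  simp [jkClamp, this, min_eq_right h]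

/-- finite-sum piecewise-linear interpolation of `E` at integers. -/
noncomputable def jkGN (E : ℕ → ℝ) (N : ℕ) (r : ℝ) : ℝ :=
  E 0 + ∑ k ∈ Finset.range N, (E (k + 1) - E k) * jkClamp (r - k)

noncomputable def jkG (E : ℕ → ℝ) (r : ℝ) : ℝ := jkGN E (⌊r⌋.toNat + 1) r

lemma jkGN_stable (E : ℕ → ℝ) {N M : ℕ} (h : N ≤ M) {r : ℝ} (hr : r ≤ N) :
    jkGN E M r = jkGN E N r := by
  unfold jkGN
  congr 1
  refine (Finset.sum_subset (Finset.range_subset_range.2 h) ?_).symm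
  intro k hk hk'
  have hNk' : N ≤ k := le_of_not_gt (fun h => hk' (Finset.mem_range.2 h))
  have hNk : (N : ℝ) ≤ k := by exact_mod_cast hNk'
  rw [jkClamp_of_nonpos (by linarith), mul_zero]

lemma jkG_eq (E : ℕ → ℝ) {N : ℕ} {r : ℝ} (hr : r < N) : jkG E r = jkGN E N r := by
  have h1 : r ≤ (⌊r⌋.toNat + 1 : ℕ) := by
    have := Int.lt_floor_add_one r
    have h2 : (⌊r⌋ : ℝ) ≤ (⌊r⌋.toNat : ℝ) := by exact_mod_cast Int.self_le_toNat ⌊r⌋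
    push_cast
    linarith
  have hK1 : jkGN E (max (⌊r⌋.toNat + 1) N) r = jkGN E (⌊r⌋.toNat + 1) r :=
    jkGN_stable E (le_max_left _ _) h1
  have hK2 : jkGN E (max (⌊r⌋.toNat + 1) N) r = jkGN E N r :=
    jkGN_stable E (le_max_right _ _) hr.le
  unfold jkG
  rw [← hK1, hK2]

lemma jkGN_mono (E : ℕ → ℝ) (hE : Monotone E) (N : ℕ) : Monotone (jkGN E N) := by
  intro r s hrs
  unfold jkGN
  exact add_le_add_right (Finset.sum_le_sum fun k _ =>
      mul_le_mul_of_nonneg_left (jkClamp_mono (by linarith))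
        (sub_nonneg.2 (hE (Nat.le_succ k)))) _

lemma jkG_mono (E : ℕ → ℝ) (hE : Monotone E) : Monotone (jkG E) := by
  intro r s hrs
  set N : ℕ := ⌊s⌋.toNat + 1 with hN
  have hsN : s < N := by
    have := Int.lt_floor_add_one s
    have h2 : (⌊s⌋ : ℝ) ≤ (⌊s⌋.toNat : ℝ) := by exact_mod_cast Int.self_le_toNat ⌊s⌋
    rw [hN]
    push_cast
    linarith
  rw [jkG_eq E (lt_of_le_of_lt hrs hsN), jkG_eq E hsN]
  exact jkGN_mono E hE N hrs

lemma jkGN_nat (E : ℕ → ℝ) (N n : ℕ) : jkGN E N n = E (min n N) := by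
  induction N with
  | zero => simp [jkGN]
  | succ N ih =>
    unfold jkGN at ih ⊢
    rw [Finset.sum_range_succ, ← add_assoc, ih]
    rcases le_or_gt n N with h | h
    · rw [jkClamp_of_nonpos (by exact_mod_cast sub_nonpos.2 (by exact_mod_cast h : (n:ℝ) ≤ N)),
        mul_zero, add_zero, min_eq_left h, min_eq_left (by omega)]
    · have h1 : (1 : ℝ) ≤ (n : ℝ) - N := by
        have : (N : ℝ) + 1 ≤ n := by exact_mod_cast h
        linarith
      rw [jkClamp_of_one_le h1, mul_one, min_eq_right h.le, min_eq_right (by omega)]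
      ring

lemma jkG_nat (E : ℕ → ℝ) (n : ℕ) : jkG E n = E n := by
  rw [jkG_eq E (show (n : ℝ) < (n + 1 : ℕ) by exact_mod_cast Nat.lt_succ_self n),
    jkGN_nat, min_eq_left (Nat.le_succ n)]

lemma jkG_continuous (E : ℕ → ℝ) : Continuous (jkG E) := by
  rw [continuous_iff_continuousAt]
  intro r₀
  set N : ℕ := ⌊r₀⌋.toNat + 1 with hN
  have hr₀ : r₀ < N := by
    have := Int.lt_floor_add_one r₀
    have h2 : (⌊r₀⌋ : ℝ) ≤ (⌊r₀⌋.toNat : ℝ) := by exact_mod_cast Int.self_le_toNat ⌊r₀⌋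
    rw [hN]
    push_cast
    linarith
  have hcont : Continuous (jkGN E N) := by
    unfold jkGN
    exact continuous_const.add (continuous_finset_sum _ fun k _ =>
      continuous_const.mul (jkClamp_continuous.comp (continuous_id.sub continuous_const)))
  refine hcont.continuousAt.congr ?_
  filter_upwards [Iio_mem_nhds hr₀] with r hr
  exact (jkG_eq E hr).symm

/-- a jump map `g` with `g(0,0) = 0`, Lipschitz on bounded sets in each
variable, is bounded by a class-𝒦 function of the input norm on the input-dependent ball
`‖x‖ ≤ κ(‖u‖)`. -/
theorem jumpClassKBound {X U : Type*} [NormedAddCommGroup X] [NormedAddCommGroup U]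
    (g : X → U → X) (hg0 : g 0 0 = 0)
    (hg : ∀ C, 0 < C → ∀ D, 0 < D → ∃ L1, 0 < L1 ∧ ∃ L2, 0 < L2 ∧
      (∀ x y : X, ‖x‖ ≤ C → ‖y‖ ≤ C → ∀ u : U, ‖u‖ ≤ D →
        ‖g x u - g y u‖ ≤ L1 * ‖x - y‖) ∧
      (∀ x : X, ‖x‖ ≤ C → ∀ u v : U, ‖u‖ ≤ D → ‖v‖ ≤ D →
        ‖g x u - g x v‖ ≤ L2 * ‖u - v‖))
    (κ : ℝ → ℝ) (hκ : ClassKInf κ) :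
    ∃ αt : ℝ → ℝ, ClassK αt ∧
      ∀ (x : X) (u : U), ‖x‖ ≤ κ ‖u‖ → ‖g x u‖ ≤ αt ‖u‖ := by
  obtain ⟨⟨hκc, hκsm, hκ0⟩, -⟩ := hκ
  have hκmono : MonotoneOn κ (Set.Ici 0) := hκsm.monotoneOn
  have hκnn : ∀ r, 0 ≤ r → 0 ≤ κ r := fun r hr => by
    have := hκmono (Set.self_mem_Ici) hr hr
    rwa [hκ0] at this
  have hκpos : ∀ r, 0 < r → 0 < κ r := fun r hr => by
    have := hκsm (Set.self_mem_Ici) (le_of_lt hr) hr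
    rwa [hκ0] at this
  choose L1 hL1 L2 hL2 hLipx hLipu using hg
  have hp : ∀ n : ℕ, (0:ℝ) < κ ((n:ℝ) + 1) := fun n => hκpos _ (by positivity)
  have hq : ∀ n : ℕ, (0:ℝ) < (n:ℝ) + 1 := fun n => by positivity
  set A : ℕ → ℝ := fun n => L1 (κ ((n:ℝ) + 1)) (hp n) ((n:ℝ) + 1) (hq n) with hA
  set B : ℕ → ℝ := fun n => L2 (κ ((n:ℝ) + 1)) (hp n) ((n:ℝ) + 1) (hq n) with hB
  set E : ℕ → ℝ := fun n => 1 + ∑ k ∈ Finset.range (n + 1), max (A k) (B k) with hE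
  have hmaxnn : ∀ k : ℕ, 0 ≤ max (A k) (B k) := fun k =>
    le_max_of_le_left (le_of_lt (hL1 _ (hp k) _ (hq k)))
  have hEmono : Monotone E := by
    intro n m hnm
    exact add_le_add_right (Finset.sum_le_sum_of_subset_of_nonneg
      (Finset.range_subset_range.2 (by omega)) (fun k _ _ => hmaxnn k)) 1
  have hE1 : ∀ n, 1 ≤ E n := fun n =>
    le_add_of_nonneg_right (Finset.sum_nonneg fun k _ => hmaxnn k)
  have hE_ge : ∀ n, max (A n) (B n) ≤ E n := fun n => by
    have h1 : max (A n) (B n) ≤ ∑ k ∈ Finset.range (n + 1), max (A k) (B k) :=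
      Finset.single_le_sum (fun k _ => hmaxnn k) (Finset.self_mem_range_succ n)
    show max (A n) (B n) ≤ 1 + ∑ k ∈ Finset.range (n + 1), max (A k) (B k)
    linarith
  refine ⟨fun r => jkG E r * (κ r + r), ⟨?_, ?_, ?_⟩, ?_⟩
  · exact ((jkG_continuous E).continuousOn).mul (hκc.add continuousOn_id)
  · intro a ha b hb hab
    have hGa : 0 < jkG E a := by
      have h0 : jkG E 0 = E 0 := by exact_mod_cast jkG_nat E 0
      have := jkG_mono E hEmono (show (0:ℝ) ≤ a from ha)
      rw [h0] at this
      linarith [hE1 0]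
    have hGab : jkG E a ≤ jkG E b := jkG_mono E hEmono (le_of_lt hab)
    have hκab : κ a + a < κ b + b := by
      have := hκsm ha hb hab
      linarith
    have hnn : 0 ≤ κ a + a := by
      have := hκnn a ha
      linarith [ha.out]
    calc jkG E a * (κ a + a) ≤ jkG E b * (κ a + a) :=
          mul_le_mul_of_nonneg_right hGab hnn
      _ < jkG E b * (κ b + b) :=
          mul_lt_mul_of_pos_left hκab (lt_of_lt_of_le hGa hGab)
  · simp [hκ0]
  · intro x u hx
    rcases eq_or_lt_of_le (norm_nonneg u) with h0 | h0
    · have hu0 : u = 0 := norm_eq_zero.1 h0.symm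
      subst hu0
      simp only [norm_zero, hκ0] at hx
      have hx0 : x = 0 := norm_eq_zero.1 (le_antisymm hx (norm_nonneg x))
      subst hx0
      simp [hg0, hκ0]
    · set r : ℝ := ‖u‖ with hr
      set n : ℕ := ⌊r⌋.toNat with hn
      have hfl : ((n : ℤ) : ℝ) = (⌊r⌋ : ℝ) := by
        exact_mod_cast congrArg (fun z : ℤ => (z : ℝ)) (Int.toNat_of_nonneg (Int.floor_nonneg.2 h0.le))
      have hn_le : (n : ℝ) ≤ r := by
        have := Int.floor_le r
        push_cast at hfl ⊢
        linarith
      have hr_lt : r < (n : ℝ) + 1 := by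
        have := Int.lt_floor_add_one r
        push_cast at hfl ⊢
        linarith
      have hxC : ‖x‖ ≤ κ ((n:ℝ) + 1) :=
        le_trans hx (hκmono (norm_nonneg u) (Set.mem_Ici.2 (by positivity)) hr_lt.le)
      have huD : ‖u‖ ≤ (n:ℝ) + 1 := hr_lt.le
      have h1 := hLipx (κ ((n:ℝ) + 1)) (hp n) ((n:ℝ) + 1) (hq n) x 0 hxC
        (by simpa using le_of_lt (hp n)) u huD
      have h2 := hLipu (κ ((n:ℝ) + 1)) (hp n) ((n:ℝ) + 1) (hq n) 0
        (by simpa using le_of_lt (hp n)) u 0 huD (by simp only [norm_zero]; positivity)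
      rw [sub_zero] at h1
      rw [hg0, sub_zero, sub_zero] at h2
      have hsplit : g x u = (g x u - g 0 u) + g 0 u := by abel
      have hnorm : ‖g x u‖ ≤ A n * ‖x‖ + B n * ‖u‖ := by
        calc ‖g x u‖ = ‖(g x u - g 0 u) + g 0 u‖ := by rw [← hsplit]
          _ ≤ ‖g x u - g 0 u‖ + ‖g 0 u‖ := norm_add_le _ _
          _ ≤ A n * ‖x‖ + B n * ‖u‖ := add_le_add h1 h2
      have hEn : A n * ‖x‖ + B n * ‖u‖ ≤ E n * (κ r + r) := by
        have hAE : A n ≤ E n := le_trans (le_max_left _ _) (hE_ge n)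
        have hBE : B n ≤ E n := le_trans (le_max_right _ _) (hE_ge n)
        have hκr : 0 ≤ κ r := hκnn r h0.le
        have hxκ : ‖x‖ ≤ κ r := hx
        have hxnn := norm_nonneg x
        have hApos := hL1 (κ ((n:ℝ) + 1)) (hp n) ((n:ℝ) + 1) (hq n)
        have hBpos := hL2 (κ ((n:ℝ) + 1)) (hp n) ((n:ℝ) + 1) (hq n)
        nlinarith
      have hGE : E n * (κ r + r) ≤ jkG E r * (κ r + r) := by
        have hG : E n ≤ jkG E r := by
          have := jkG_mono E hEmono hn_le
          rwa [jkG_nat E n] at this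
        have : 0 ≤ κ r + r := by linarith [hκnn r h0.le]
        exact mul_le_mul_of_nonneg_right hG this
      exact le_trans hnorm (le_trans hEn hGE)
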